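/- Every two-sided matching market with unit-demand bidders having integer valuations and positive integer budgets admits a core outcome, i.e., there exists an outcome (μ,p) with no blocking pairs. -/

import Mathlib

open scoped Classical

/-- Goods are indexed by `Fin (m+1)`; good `0` is the dummy good. -/
abbrev Good (m : ℕ) : Type := Fin (m + 1)

/-- Utility `π_i(j,p)`: `v_i(j) - p(j)` if `p(j) ≤ b^i`, and `-∞` otherwise. -/
noncomputable def util {n m : ℕ} (v : Fin n → Good m → ℕ) (b : Fin n → ℕ)
    (p : Good m → ℝ) (i : Fin n) (j : Good m) : WithBot ℝ :=
  if p j ≤ (b i : ℝ) then (((v i j : ℝ) - p j : ℝ) : WithBot ℝ) else ⊥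

/-- An assignment: each non-dummy good is assigned to at most one bidder. -/
def IsAssignment {n m : ℕ} (μ : Fin n → Good m) : Prop :=
  ∀ j : Good m, j ≠ 0 → ∀ i i' : Fin n, μ i = j → μ i' = j → i = i'

/-- A price vector: nonnegative prices with `p(0) = 0`. -/
def IsPriceVec {m : ℕ} (p : Good m → ℝ) : Prop :=
  p 0 = 0 ∧ ∀ j, 0 ≤ p j

/-- An outcome: an assignment together with a price vector such that no budget is
violated and every positively priced good is assigned to exactly one bidder. -/
def IsOutcome {n m : ℕ} (b : Fin n → ℕ) (μ : Fin n → Good m) (p : Good m → ℝ) : Prop :=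
  IsAssignment μ ∧ IsPriceVec p ∧ (∀ i, p (μ i) ≤ (b i : ℝ)) ∧
    ∀ j : Good m, 0 < p j → ∃! i, μ i = j

/-- A blocking pair `(i,j)`: `π_i(j,p) > π_i(μ(i),p)` and `p(j) < b^i`. -/
def IsBlockingPair {n m : ℕ} (v : Fin n → Good m → ℕ) (b : Fin n → ℕ)
    (μ : Fin n → Good m) (p : Good m → ℝ) (i : Fin n) (j : Good m) : Prop :=
  util v b p i (μ i) < util v b p i j ∧ p j < (b i : ℝ)

/-- A core outcome: an outcome with no blocking pairs. -/
def IsCore {n m : ℕ} (v : Fin n → Good m → ℕ) (b : Fin n → ℕ)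
    (μ : Fin n → Good m) (p : Good m → ℝ) : Prop :=
  IsOutcome b μ p ∧ ∀ i j, ¬ IsBlockingPair v b μ p i j

section AuctionAux

def AInv {n m : ℕ} (V : Fin n → Good m → ℕ) (B : Fin n → ℕ)
    (μ : Fin n → Option (Good m)) (p : Good m → ℕ) : Prop :=
  (∀ j : Good m, j ≠ 0 → ∀ i i' : Fin n, μ i = some j → μ i' = some j → i = i') ∧
  p 0 = 0 ∧
  (∀ i j, μ i = some j → p j ≤ B i ∧ p j ≤ V i j) ∧
  (∀ j : Good m, j ≠ 0 → p j ≠ 0 → ∃ i, μ i = some j) ∧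
  (∀ i j₀, μ i = some j₀ → ∀ j : Good m, j ≠ 0 →
    B i < p j + 1 ∨ V i j + p j₀ ≤ V i j₀ + p j + 1)
def AOut {n m : ℕ} (V : Fin n → Good m → ℕ) (B : Fin n → ℕ)
    (ν : Fin n → Good m) (q : Good m → ℕ) : Prop :=
  (∀ j : Good m, j ≠ 0 → ∀ i i' : Fin n, ν i = j → ν i' = j → i = i') ∧
  q 0 = 0 ∧
  (∀ i, q (ν i) ≤ B i) ∧
  (∀ i, q (ν i) ≤ V i (ν i)) ∧
  (∀ j : Good m, j ≠ 0 → q j ≠ 0 → ∃ i, ν i = j) ∧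
  (∀ i (j : Good m), j ≠ 0 → B i < q j + 1 ∨ V i j + q (ν i) ≤ V i (ν i) + q j + 1)
lemma price_bound {n m : ℕ} (V : Fin n → Good m → ℕ) (B : Fin n → ℕ)
    (μ : Fin n → Option (Good m)) (p : Good m → ℕ) (h : AInv V B μ p) (j : Good m) :
    p j ≤ Finset.univ.sup B := by
  obtain ⟨h1, h2, h3, h4, h5⟩ := h
  by_cases hj : j = 0
  · simp [hj, h2]
  by_cases hp : p j = 0
  · simp [hp]
  obtain ⟨i, hi⟩ := h4 j hj hp
  exact le_trans (h3 i j hi).1 (Finset.le_sup (Finset.mem_univ i))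
lemma sum_price_bound {n m : ℕ} (V : Fin n → Good m → ℕ) (B : Fin n → ℕ)
    (μ : Fin n → Option (Good m)) (p : Good m → ℕ) (h : AInv V B μ p) :
    ∑ j, p j ≤ (m + 1) * Finset.univ.sup B := by
  calc ∑ j, p j ≤ ∑ _j : Good m, Finset.univ.sup B :=
        Finset.sum_le_sum fun j _ => price_bound V B μ p h j
    _ = (m + 1) * Finset.univ.sup B := by
        rw [Finset.sum_const, Finset.card_univ, Fintype.card_fin, smul_eq_mul]
/-- Measure of a state: number of active bidders plus (n+1) times remaining price slack. -/
def ameas {n m : ℕ} (B : Fin n → ℕ) (μ : Fin n → Option (Good m)) (p : Good m → ℕ) : ℕ :=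
  (Finset.univ.filter fun i => μ i = none).card +
    (n + 1) * ((m + 1) * Finset.univ.sup B - ∑ j, p j)
lemma auction_rec {n m : ℕ} (V : Fin n → Good m → ℕ) (B : Fin n → ℕ) :
    ∀ (N : ℕ) (μ : Fin n → Option (Good m)) (p : Good m → ℕ),
      AInv V B μ p → ameas B μ p ≤ N →
      ∃ (ν : Fin n → Good m) (q : Good m → ℕ), AOut V B ν q := by
  intro N
  induction N using Nat.strong_induction_on with
  | _ N ih =>
  intro μ p hInv hM
  by_cases hact : ∀ i, μ i ≠ none
  · -- all settled: extract the final outcome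
    obtain ⟨h1, h2, h3, h4, h5⟩ := hInv
    have hsome : ∀ i, μ i = some ((μ i).getD 0) := by
      intro i
      obtain ⟨x, hx⟩ := Option.ne_none_iff_exists'.mp (hact i)
      rw [hx]; rfl
    refine ⟨fun i => (μ i).getD 0, p, ?_, h2, ?_, ?_, ?_, ?_⟩
    · intro j hj i i' hi hi'
      simp only at hi hi'
      exact h1 j hj i i' (hi ▸ hsome i) (hi' ▸ hsome i')
    · intro i
      exact (h3 i _ (hsome i)).1
    · intro i
      exact (h3 i _ (hsome i)).2
    · intro j hj hp
      obtain ⟨i, hi⟩ := h4 j hj hp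
      refine ⟨i, ?_⟩
      simp only
      rw [hi]; rfl
    · intro i j hj
      exact h5 i _ (hsome i) j hj
  · -- some bidder is active
    push_neg at hact
    obtain ⟨i, hi⟩ := hact
    obtain ⟨h1, h2, h3, h4, h5⟩ := hInv
    -- candidate goods for a bid by i
    set C : Finset (Good m) :=
      Finset.univ.filter (fun j => j ≠ 0 ∧ p j + 1 ≤ B i ∧ p j + 1 ≤ V i j) with hC
    have hiact : i ∈ Finset.univ.filter fun k => μ k = none := by
      simp [hi]
    by_cases hCne : C.Nonempty
    · -- bid: pick the best candidate
      obtain ⟨j₀, hj₀C, hj₀max⟩ := C.exists_max_image (fun j => V i j - p j) hCne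
      rw [hC, Finset.mem_filter] at hj₀C
      obtain ⟨-, hj₀0, hj₀B, hj₀V⟩ := hj₀C
      set p' : Good m → ℕ := Function.update p j₀ (p j₀ + 1) with hp'
      set μ' : Fin n → Option (Good m) := fun k =>
        if k = i then some j₀ else if μ k = some j₀ then none else μ k with hμ'
      have hp'j₀ : p' j₀ = p j₀ + 1 := Function.update_self _ _ _
      have hp'ne : ∀ j, j ≠ j₀ → p' j = p j := fun j hj => Function.update_of_ne hj _ _
      have hμ'i : μ' i = some j₀ := by simp [hμ']
      have hμ'other : ∀ k, k ≠ i → μ k ≠ some j₀ → μ' k = μ k := by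
        intro k hk hk2; simp [hμ', hk, hk2]
      -- the new invariant
      have hInv' : AInv V B μ' p' := by
        refine ⟨?_, ?_, ?_, ?_, ?_⟩
        · intro j hj k k' hk hk'
          have hcase : ∀ k₁, μ' k₁ = some j → k₁ = i ∨ (μ k₁ = some j ∧ j ≠ j₀) := by
            intro k₁ hk₁
            by_cases e : k₁ = i
            · exact Or.inl e
            · right
              rw [hμ'] at hk₁
              simp only [e, if_false] at hk₁
              by_cases e2 : μ k₁ = some j₀
              · simp [e2] at hk₁
              · simp only [e2, if_false] at hk₁
                refine ⟨hk₁, fun ejj => e2 (by rw [← ejj]; exact hk₁)⟩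
          rcases hcase k hk with ek | ⟨ek, ejj⟩
          · rcases hcase k' hk' with ek' | ⟨ek', ejj'⟩
            · rw [ek, ek']
            · exfalso
              rw [ek] at hk
              rw [hμ'i] at hk
              simp at hk
              exact ejj' (by rw [hk])
          · rcases hcase k' hk' with ek' | ⟨ek', ejj'⟩
            · exfalso
              rw [ek'] at hk'
              rw [hμ'i] at hk'
              simp at hk'
              exact ejj (by rw [hk'])
            · exact h1 j hj k k' ek ek'
        · rw [hp'ne 0 (Ne.symm hj₀0), h2]
        · intro k j hkj
          by_cases e : k = i
          · rw [e] at hkj ⊢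
            rw [hμ'i] at hkj
            have hjj : j = j₀ := by injection hkj with h; exact h.symm
            rw [hjj, hp'j₀]
            exact ⟨hj₀B, hj₀V⟩
          · have hknj : μ k ≠ some j₀ := by
              intro e2
              rw [hμ'] at hkj
              simp only [e, if_false, e2, if_true] at hkj
              exact absurd hkj (by simp)
            have hkold := hμ'other k e hknj
            rw [hkold] at hkj
            have hjj : j ≠ j₀ := fun ejj => hknj (by rw [← ejj]; exact hkj)
            rw [hp'ne j hjj]
            exact h3 k j hkj
        · intro j hj hp
          by_cases e : j = j₀
          · exact ⟨i, by rw [e]; exact hμ'i⟩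
          · rw [hp'ne j e] at hp
            obtain ⟨k, hk⟩ := h4 j hj hp
            have hki : k ≠ i := fun ekk => by rw [ekk, hi] at hk; exact absurd hk (by simp)
            have hknj : μ k ≠ some j₀ := by
              rw [hk]; intro hcon; exact e (by injection hcon)
            exact ⟨k, by rw [hμ'other k hki hknj]; exact hk⟩
        · intro k jk hkjk j hj
          by_cases e : k = i
          · -- new holder i of j₀
            rw [e] at hkjk ⊢
            rw [hμ'i] at hkjk
            have ejk : jk = j₀ := by injection hkjk with h; exact h.symm
            rw [ejk]
            by_cases ej : j = j₀
            · subst ej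
              right
              rw [hp'j₀]
              omega
            · rw [hp'ne j ej, hp'j₀]
              by_cases hjB : p j + 1 ≤ B i
              · by_cases hjV : p j + 1 ≤ V i j
                · right
                  have hjC : j ∈ C := by
                    rw [hC, Finset.mem_filter]
                    exact ⟨Finset.mem_univ j, hj, hjB, hjV⟩
                  have := hj₀max j hjC
                  omega
                · right; omega
              · left; omega
          · -- old settled bidder k; its good jk ≠ j₀
            have hknj : μ k ≠ some j₀ := by
              intro hcon
              rw [hμ'] at hkjk
              simp only [e, if_false, hcon, if_true] at hkjk
              exact absurd hkjk (by simp)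
            have hkold : μ k = some jk := by rw [← hμ'other k e hknj]; exact hkjk
            have hjkj₀ : jk ≠ j₀ := fun ejj => hknj (by rw [← ejj]; exact hkold)
            rw [hp'ne jk hjkj₀]
            by_cases ej : j = j₀
            · rw [ej, hp'j₀]
              rcases h5 k jk hkold j₀ hj₀0 with hl | hr
              · left; omega
              · right; omega
            · rw [hp'ne j ej]
              exact h5 k jk hkold j hj
      -- measure decreases
      have hsum' : ∑ j, p' j = (∑ j, p j) + 1 := by
        rw [hp', Finset.sum_update_of_mem (Finset.mem_univ j₀),
          Finset.sdiff_singleton_eq_erase]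
        rw [← Finset.sum_erase_add _ _ (Finset.mem_univ j₀)]
        omega
      have hsum'le : ∑ j, p' j ≤ (m + 1) * Finset.univ.sup B :=
        sum_price_bound V B μ' p' hInv'
      have hactle : (Finset.univ.filter fun k => μ' k = none).card ≤
          (Finset.univ.filter fun k => μ k = none).card := by
        by_cases hd : ∃ k, k ≠ i ∧ μ k = some j₀
        · obtain ⟨k₀, hk₀i, hk₀⟩ := hd
          have hsub : (Finset.univ.filter fun k => μ' k = none) ⊆
              insert k₀ ((Finset.univ.filter fun k => μ k = none).erase i) := by
            intro k hk
            rw [Finset.mem_filter] at hk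
            obtain ⟨-, hk⟩ := hk
            by_cases e : k = i
            · rw [e, hμ'i] at hk; exact absurd hk (by simp)
            · rw [hμ'] at hk
              simp only [e, if_false] at hk
              by_cases e2 : μ k = some j₀
              · have hkk : k = k₀ := h1 j₀ hj₀0 k k₀ e2 hk₀
                rw [hkk]
                exact Finset.mem_insert_self k₀ _
              · simp only [e2, if_false] at hk
                apply Finset.mem_insert_of_mem
                rw [Finset.mem_erase]
                exact ⟨e, Finset.mem_filter.mpr ⟨Finset.mem_univ k, hk⟩⟩
          calc (Finset.univ.filter fun k => μ' k = none).card
              ≤ (insert k₀ ((Finset.univ.filter fun k => μ k = none).erase i)).card :=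
                Finset.card_le_card hsub
            _ ≤ ((Finset.univ.filter fun k => μ k = none).erase i).card + 1 :=
                Finset.card_insert_le _ _
            _ ≤ (Finset.univ.filter fun k => μ k = none).card := by
                rw [Finset.card_erase_of_mem hiact]
                have : 1 ≤ (Finset.univ.filter fun k => μ k = none).card :=
                  Finset.card_pos.mpr ⟨i, hiact⟩
                omega
        · push_neg at hd
          have hsub : (Finset.univ.filter fun k => μ' k = none) ⊆
              (Finset.univ.filter fun k => μ k = none).erase i := by
            intro k hk
            rw [Finset.mem_filter] at hk
            obtain ⟨-, hk⟩ := hk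
            by_cases e : k = i
            · rw [e, hμ'i] at hk; exact absurd hk (by simp)
            · rw [hμ'] at hk
              simp only [e, if_false] at hk
              by_cases e2 : μ k = some j₀
              · exact absurd e2 (hd k e)
              · simp only [e2, if_false] at hk
                rw [Finset.mem_erase]
                exact ⟨e, Finset.mem_filter.mpr ⟨Finset.mem_univ k, hk⟩⟩
          calc (Finset.univ.filter fun k => μ' k = none).card
              ≤ ((Finset.univ.filter fun k => μ k = none).erase i).card :=
                Finset.card_le_card hsub
            _ ≤ (Finset.univ.filter fun k => μ k = none).card := Finset.card_le_card
                (Finset.erase_subset _ _)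
      have hmeas : ameas B μ' p' < ameas B μ p := by
        unfold ameas
        have h6 : (m + 1) * Finset.univ.sup B - ∑ j, p' j + 1 ≤
            (m + 1) * Finset.univ.sup B - ∑ j, p j := by omega
        have h7 : (n + 1) * ((m + 1) * Finset.univ.sup B - ∑ j, p' j + 1) ≤
            (n + 1) * ((m + 1) * Finset.univ.sup B - ∑ j, p j) :=
          Nat.mul_le_mul_left _ h6
        rw [Nat.mul_add, Nat.mul_one] at h7
        have h8 : 1 ≤ n + 1 := Nat.le_add_left 1 n
        calc (Finset.univ.filter fun k => μ' k = none).card +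
              (n + 1) * ((m + 1) * Finset.univ.sup B - ∑ j, p' j)
            < (Finset.univ.filter fun k => μ' k = none).card +
              ((n + 1) * ((m + 1) * Finset.univ.sup B - ∑ j, p' j) + (n + 1)) := by omega
          _ ≤ (Finset.univ.filter fun k => μ k = none).card +
              (n + 1) * ((m + 1) * Finset.univ.sup B - ∑ j, p j) := by
                exact Nat.add_le_add hactle h7
      exact ih (ameas B μ' p') (lt_of_lt_of_le hmeas hM) μ' p' hInv' le_rfl
    · -- no candidate: settle i at the dummy good
      set μ' : Fin n → Option (Good m) := Function.update μ i (some 0) with hμ'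
      have hμ'i : μ' i = some 0 := Function.update_self _ _ _
      have hμ'other : ∀ k, k ≠ i → μ' k = μ k := fun k hk => Function.update_of_ne hk _ _
      have hInv' : AInv V B μ' p := by
        refine ⟨?_, h2, ?_, ?_, ?_⟩
        · intro j hj k k' hk hk'
          have hkne : ∀ k₁, μ' k₁ = some j → k₁ ≠ i := by
            intro k₁ hk₁ e
            rw [e, hμ'i] at hk₁
            injection hk₁ with h
            exact hj h.symm
          have ek := hkne k hk
          have ek' := hkne k' hk'
          rw [hμ'other k ek] at hk
          rw [hμ'other k' ek'] at hk'
          exact h1 j hj k k' hk hk'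
        · intro k j hkj
          by_cases e : k = i
          · rw [e, hμ'i] at hkj
            injection hkj with h
            rw [← h, h2]
            exact ⟨Nat.zero_le _, Nat.zero_le _⟩
          · rw [hμ'other k e] at hkj
            exact h3 k j hkj
        · intro j hj hp
          obtain ⟨k, hk⟩ := h4 j hj hp
          have hki : k ≠ i := fun e => by rw [e, hi] at hk; exact absurd hk (by simp)
          exact ⟨k, by rw [hμ'other k hki]; exact hk⟩
        · intro k jk hkjk j hj
          by_cases e : k = i
          · rw [e, hμ'i] at hkjk
            injection hkjk with hjk
            subst hjk
            rw [e]
            have hjC : j ∉ C := fun hjC => hCne ⟨j, hjC⟩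
            rw [hC, Finset.mem_filter] at hjC
            push_neg at hjC
            have hnc := hjC (Finset.mem_univ j) hj
            by_cases hjB : p j + 1 ≤ B i
            · right
              have hv := hnc hjB
              rw [h2]
              omega
            · left; omega
          · rw [hμ'other k e] at hkjk
            exact h5 k jk hkjk j hj
      have hmeas : ameas B μ' p < ameas B μ p := by
        unfold ameas
        have hss : (Finset.univ.filter fun k => μ' k = none) ⊂
            (Finset.univ.filter fun k => μ k = none) := by
          constructor
          · intro k hk
            rw [Finset.mem_filter] at hk
            obtain ⟨-, hk⟩ := hk
            have hki : k ≠ i := fun e => by rw [e, hμ'i] at hk; exact absurd hk (by simp)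
            rw [hμ'other k hki] at hk
            exact Finset.mem_filter.mpr ⟨Finset.mem_univ k, hk⟩
          · intro hsub
            have := hsub hiact
            rw [Finset.mem_filter, hμ'i] at this
            exact absurd this.2 (by simp)
        have := Finset.card_lt_card hss
        omega
      exact ih (ameas B μ' p) (lt_of_lt_of_le hmeas hM) μ' p hInv' le_rfl
lemma auction {n m : ℕ} (V : Fin n → Good m → ℕ) (B : Fin n → ℕ) :
    ∃ (ν : Fin n → Good m) (q : Good m → ℕ), AOut V B ν q := by
  have hInv : AInv V B (fun _ => none) (fun _ => 0) := by
    refine ⟨?_, rfl, ?_, ?_, ?_⟩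
    · intro j hj k k' hk; exact absurd hk (by simp)
    · intro k j hk; exact absurd hk (by simp)
    · intro j hj hp; exact absurd rfl hp
    · intro k j₀ hk; exact absurd hk (by simp)
  exact auction_rec V B (ameas B (fun _ => none) (fun _ => 0)) _ _ hInv le_rfl

end AuctionAux

/-- Every two-sided matching market with unit-demand bidders having
integer valuations and positive integer budgets admits a core outcome. -/
theorem exists_core_outcome (n m : ℕ)
    (v : Fin n → Good m → ℕ) (b : Fin n → ℕ)
    (hv0 : ∀ i, v i 0 = 0) (hb : ∀ i, 0 < b i) :
    ∃ (μ : Fin n → Good m) (p : Good m → ℝ), IsCore v b μ p := by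
  -- run the `ε = 1` auction on the data scaled by `k+1`, for every `k`
  have haux : ∀ k : ℕ, ∃ (ν : Fin n → Good m) (q : Good m → ℕ),
      AOut (fun i j => (k + 1) * v i j) (fun i => (k + 1) * b i) ν q :=
    fun k => auction _ _
  choose μs ps hps using haux
  have h1 := fun k => (hps k).1
  have h2 := fun k => (hps k).2.1
  have h3 := fun k => (hps k).2.2.1
  have h4 := fun k => (hps k).2.2.2.1
  have h5 := fun k => (hps k).2.2.2.2.1
  have h6 := fun k => (hps k).2.2.2.2.2
  set R : ℕ := Finset.univ.sup b with hR
  -- integer price bound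
  have hpsle : ∀ k (j : Good m), ps k j ≤ (k + 1) * R := by
    intro k j
    by_cases hj : j = 0
    · rw [hj, h2 k]; exact Nat.zero_le _
    by_cases hp0 : ps k j = 0
    · rw [hp0]; exact Nat.zero_le _
    obtain ⟨i, hi⟩ := h5 k j hj hp0
    have := h3 k i
    rw [hi] at this
    exact le_trans this (Nat.mul_le_mul_left _ (Finset.le_sup (Finset.mem_univ i)))
  -- normalized real prices
  set q : ℕ → Good m → ℝ := fun k j => (ps k j : ℝ) / ((k : ℝ) + 1) with hq
  have hkpos : ∀ k : ℕ, (0 : ℝ) < (k : ℝ) + 1 := by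
    intro k; positivity
  have hqmem : ∀ k, q k ∈ Set.Icc (0 : Good m → ℝ) (fun _ => (R : ℝ)) := by
    intro k
    rw [Set.mem_Icc]
    constructor
    · intro j; rw [hq]; positivity
    · intro j
      rw [hq]
      simp only
      rw [div_le_iff₀ (hkpos k)]
      calc (ps k j : ℝ) ≤ ((k + 1) * R : ℕ) := by exact_mod_cast hpsle k j
        _ = (R : ℝ) * ((k : ℝ) + 1) := by push_cast; ring
  -- a subsequence with constant assignment
  obtain ⟨μ0, hμ0⟩ := Finite.exists_infinite_fiber μs
  set s : Set ℕ := μs ⁻¹' {μ0} with hs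
  haveI : Infinite s := hμ0
  set ψ : ℕ ↪o ℕ := Nat.orderEmbeddingOfSet s with hψ
  have hψmem : ∀ t, μs (ψ t) = μ0 := by
    intro t
    have : ψ t ∈ Set.range ψ := ⟨t, rfl⟩
    rw [Nat.orderEmbeddingOfSet_range] at this
    exact this
  -- a further subsequence with converging prices
  obtain ⟨P, hPmem, φ, hφ, hconv⟩ :=
    (isCompact_Icc (a := (0 : Good m → ℝ)) (b := fun _ => (R : ℝ))).tendsto_subseq
      (x := fun t => q (ψ t)) (fun t => hqmem (ψ t))
  set σ : ℕ → ℕ := fun t => ψ (φ t) with hσ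
  have hσmono : StrictMono σ := fun a c h => ψ.strictMono (hφ h)
  have hfix : ∀ t, μs (σ t) = μ0 := fun t => hψmem (φ t)
  have hconvj : ∀ j : Good m, Filter.Tendsto (fun t => q (σ t) j) Filter.atTop (nhds (P j)) := by
    intro j
    have := (tendsto_pi_nhds).mp hconv
    exact this j
  -- limits of constants used below
  have hKtop : Filter.Tendsto (fun t => ((σ t : ℝ) + 1)) Filter.atTop Filter.atTop :=
    Filter.tendsto_atTop_add_const_right _ 1 (tendsto_natCast_atTop_atTop.comp hσmono.tendsto_atTop)
  have hKinv : Filter.Tendsto (fun t => 1 / ((σ t : ℝ) + 1)) Filter.atTop (nhds 0) := by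
    simpa [one_div, Pi.inv_def] using hKtop.inv_tendsto_atTop
  -- basic limit facts
  have hP0 : P 0 = 0 := by
    have hzero : ∀ t, q (σ t) 0 = 0 := by
      intro t; rw [hq]; simp [h2 (σ t)]
    have : Filter.Tendsto (fun t => q (σ t) 0) Filter.atTop (nhds 0) := by
      simp only [hzero]; exact tendsto_const_nhds
    exact tendsto_nhds_unique (hconvj 0) this
  have hPnonneg : ∀ j, 0 ≤ P j := fun j => hPmem.1 j
  have hqbud : ∀ t (i : Fin n), q (σ t) (μ0 i) ≤ (b i : ℝ) := by
    intro t i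
    rw [hq]
    simp only
    rw [div_le_iff₀ (hkpos (σ t))]
    have := h3 (σ t) i
    rw [hfix t] at this
    calc (ps (σ t) (μ0 i) : ℝ) ≤ (((σ t) + 1) * b i : ℕ) := by exact_mod_cast this
      _ = (b i : ℝ) * ((σ t : ℝ) + 1) := by push_cast; ring
  have hPbud : ∀ i, P (μ0 i) ≤ (b i : ℝ) := fun i =>
    le_of_tendsto (hconvj (μ0 i)) (Filter.Eventually.of_forall fun t => hqbud t i)
  have hqIR : ∀ t (i : Fin n), q (σ t) (μ0 i) ≤ (v i (μ0 i) : ℝ) := by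
    intro t i
    rw [hq]
    simp only
    rw [div_le_iff₀ (hkpos (σ t))]
    have := h4 (σ t) i
    rw [hfix t] at this
    calc (ps (σ t) (μ0 i) : ℝ) ≤ (((σ t) + 1) * v i (μ0 i) : ℕ) := by exact_mod_cast this
      _ = (v i (μ0 i) : ℝ) * ((σ t : ℝ) + 1) := by push_cast; ring
  have hPIR : ∀ i, P (μ0 i) ≤ (v i (μ0 i) : ℝ) := fun i =>
    le_of_tendsto (hconvj (μ0 i)) (Filter.Eventually.of_forall fun t => hqIR t i)
  have hassign : IsAssignment μ0 := by
    intro j hj i i' hi hi'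
    have := h1 (σ 0)
    rw [hfix 0] at this
    exact this j hj i i' hi hi'
  refine ⟨μ0, P, ⟨hassign, ⟨hP0, hPnonneg⟩, hPbud, ?_⟩, ?_⟩
  · -- market clearing
    intro j hjpos
    have hj0 : j ≠ 0 := by
      intro h; rw [h, hP0] at hjpos; exact lt_irrefl _ hjpos
    have hex : ∃ i, μ0 i = j := by
      by_contra hne
      push_neg at hne
      have hzero : ∀ t, q (σ t) j = 0 := by
        intro t
        have : ps (σ t) j = 0 := by
          by_contra hps0
          obtain ⟨i, hi⟩ := h5 (σ t) j hj0 hps0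
          rw [hfix t] at hi
          exact hne i hi
        rw [hq]; simp [this]
      have : Filter.Tendsto (fun t => q (σ t) j) Filter.atTop (nhds 0) := by
        simp only [hzero]; exact tendsto_const_nhds
      have := tendsto_nhds_unique (hconvj j) this
      rw [this] at hjpos
      exact lt_irrefl _ hjpos
    obtain ⟨i, hi⟩ := hex
    exact ⟨i, hi, fun i' hi' => hassign j hj0 i' i hi' hi⟩
  · -- no blocking pairs
    intro i j hblock
    obtain ⟨hlt, hpb⟩ := hblock
    have hujP : util v b P i j = (((v i j : ℝ) - P j : ℝ) : WithBot ℝ) := by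
      rw [util, if_pos (le_of_lt hpb)]
    have huμP : util v b P i (μ0 i) = (((v i (μ0 i) : ℝ) - P (μ0 i) : ℝ) : WithBot ℝ) := by
      rw [util, if_pos (hPbud i)]
    rw [hujP, huμP] at hlt
    have hreal : (v i (μ0 i) : ℝ) - P (μ0 i) < (v i j : ℝ) - P j := WithBot.coe_lt_coe.mp hlt
    by_cases hj0 : j = 0
    · rw [hj0, hv0 i, hP0] at hreal
      have := hPIR i
      simp at hreal
      linarith
    · -- use the approximate stability of the auctions, in the limit
      have hEv1 : ∀ᶠ t in Filter.atTop, q (σ t) j + 1 / ((σ t : ℝ) + 1) < (b i : ℝ) := by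
        have hterm : Filter.Tendsto (fun t => q (σ t) j + 1 / ((σ t : ℝ) + 1))
            Filter.atTop (nhds (P j)) := by
          have := (hconvj j).add hKinv
          simpa using this
        exact hterm.eventually (eventually_lt_nhds hpb)
      have hEv2 : ∀ᶠ t in Filter.atTop,
          (v i (μ0 i) : ℝ) + q (σ t) j + 1 / ((σ t : ℝ) + 1) < (v i j : ℝ) + q (σ t) (μ0 i) := by
        have hterm : Filter.Tendsto
            (fun t => ((v i j : ℝ) + q (σ t) (μ0 i)) -
              ((v i (μ0 i) : ℝ) + q (σ t) j + 1 / ((σ t : ℝ) + 1)))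
            Filter.atTop
            (nhds (((v i j : ℝ) + P (μ0 i)) - ((v i (μ0 i) : ℝ) + P j + 0))) := by
          exact ((tendsto_const_nhds.add (hconvj (μ0 i))).sub
            ((tendsto_const_nhds.add (hconvj j)).add hKinv))
        have hgap : (0 : ℝ) < ((v i j : ℝ) + P (μ0 i)) - ((v i (μ0 i) : ℝ) + P j + 0) := by
          linarith
        have := hterm.eventually (eventually_gt_nhds hgap)
        filter_upwards [this] with t ht
        linarith
      obtain ⟨t, ht1, ht2⟩ := (hEv1.and hEv2).exists
      -- derive a contradiction with the auction's stability at time t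
      set K : ℝ := (σ t : ℝ) + 1 with hK
      have hKp : (0 : ℝ) < K := hkpos (σ t)
      have he : ∀ j' : Good m, q (σ t) j' * K = (ps (σ t) j' : ℝ) := by
        intro j'
        rw [hq]
        exact div_mul_cancel₀ _ (ne_of_gt hKp)
      have he1 : (1 / K) * K = 1 := by
        field_simp
      have hstab := h6 (σ t) i j hj0
      rw [hfix t] at hstab
      rcases hstab with hcase | hcase
      · -- first disjunct: `(σ t + 1) * b i < ps (σ t) j + 1`, contradicting hEv1
        have hr : (((σ t + 1) * b i : ℕ) : ℝ) < ((ps (σ t) j + 1 : ℕ) : ℝ) := by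
          exact_mod_cast hcase
        push_cast at hr
        have := mul_lt_mul_of_pos_right ht1 hKp
        rw [add_mul, he, he1] at this
        -- this : ps j + 1 < b i * K ; hr : (σt + 1) * b i < ps j + 1
        rw [hK] at this
        nlinarith [this, hr]
      · -- second disjunct contradicts hEv2
        have hr : (((σ t + 1) * v i j + ps (σ t) (μ0 i) : ℕ) : ℝ) ≤
            (((σ t + 1) * v i (μ0 i) + ps (σ t) j + 1 : ℕ) : ℝ) := by
          exact_mod_cast hcase
        push_cast at hr
        have := mul_lt_mul_of_pos_right ht2 hKp
        rw [add_mul, add_mul, add_mul, he, he, he1] at this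
        rw [hK] at this
        nlinarith [this, hr]
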